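/- The function Ψ : ℝ>0 × ℝ>0 → ℝ defined by Ψ(u, v) = (u - v)(log u - log v) is jointly convex on (0, ∞)². -/

import Mathlib

open Real Set

private lemma perspective_convex {f : ℝ → ℝ} (hf : ConvexOn ℝ (Set.Ioi (0:ℝ)) f) :
    ConvexOn ℝ (Set.Ioi (0:ℝ) ×ˢ Set.Ioi (0:ℝ))
      (fun p : ℝ × ℝ => p.2 * f (p.1 / p.2)) := by
  refine ⟨(convex_Ioi 0).prod (convex_Ioi 0), ?_⟩
  rintro ⟨u1, v1⟩ ⟨hu1, hv1⟩ ⟨u2, v2⟩ ⟨hu2, hv2⟩ a b ha hb hab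
  simp only [Set.mem_Ioi] at hu1 hv1 hu2 hv2
  simp only [Prod.smul_mk, Prod.mk_add_mk, smul_eq_mul]
  have hv : 0 < a * v1 + b * v2 := by
    rcases eq_or_lt_of_le ha with h | h
    · have hb1 : b = 1 := by linarith
      nlinarith
    · nlinarith [mul_nonneg hb hv2.le]
  set v := a * v1 + b * v2 with hvdef
  have hc : (0:ℝ) ≤ a * v1 / v := div_nonneg (mul_nonneg ha hv1.le) hv.le
  have hd : (0:ℝ) ≤ b * v2 / v := div_nonneg (mul_nonneg hb hv2.le) hv.le
  have hcd : a * v1 / v + b * v2 / v = 1 := by field_simp; exact hvdef.symm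
  have hx1 : u1 / v1 ∈ Set.Ioi (0:ℝ) := div_pos hu1 hv1
  have hx2 : u2 / v2 ∈ Set.Ioi (0:ℝ) := div_pos hu2 hv2
  have key := hf.2 hx1 hx2 hc hd hcd
  have hcomb : (a * v1 / v) • (u1 / v1) + (b * v2 / v) • (u2 / v2)
      = (a * u1 + b * u2) / v := by
    clear_value v
    simp only [smul_eq_mul]
    field_simp
  rw [hcomb] at key
  have := mul_le_mul_of_nonneg_left key hv.le
  calc v * f ((a * u1 + b * u2) / v)
      ≤ v * (a * v1 / v * f (u1 / v1) + b * v2 / v * f (u2 / v2)) := this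
    _ = a * (v1 * f (u1 / v1)) + b * (v2 * f (u2 / v2)) := by
        field_simp

private lemma f_convex : ConvexOn ℝ (Set.Ioi (0:ℝ))
    (fun x : ℝ => x * Real.log x - Real.log x) := by
  have h1 : ConvexOn ℝ (Set.Ioi (0:ℝ)) (fun x : ℝ => x * Real.log x) :=
    Real.convexOn_mul_log.subset Set.Ioi_subset_Ici_self (convex_Ioi 0)
  have h2 : ConvexOn ℝ (Set.Ioi (0:ℝ)) (fun x : ℝ => -Real.log x) :=
    strictConcaveOn_log_Ioi.concaveOn.neg
  convert h1.add h2 using 1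
  · rfl
  · funext x
    simp only [Pi.add_apply]
    ring

theorem mlsi_psi_convex :
    ConvexOn ℝ (Set.Ioi (0:ℝ) ×ˢ Set.Ioi (0:ℝ))
      (fun p : ℝ × ℝ => (p.1 - p.2) * (Real.log p.1 - Real.log p.2)) := by
  have key := perspective_convex f_convex
  have heq : ∀ p : ℝ × ℝ, p ∈ Set.Ioi (0:ℝ) ×ˢ Set.Ioi (0:ℝ) →
      (p.1 - p.2) * (Real.log p.1 - Real.log p.2)
        = p.2 * (p.1 / p.2 * Real.log (p.1 / p.2) - Real.log (p.1 / p.2)) := by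
    rintro ⟨u, v⟩ ⟨hu, hv⟩
    simp only [Set.mem_Ioi] at hu hv
    rw [Real.log_div hu.ne' hv.ne']
    field_simp
  refine ⟨key.1, fun x hx y hy a b ha hb hab => ?_⟩
  have hm := key.1 hx hy ha hb hab
  dsimp only
  rw [heq _ hx, heq _ hy, heq _ hm]
  exact key.2 hx hy ha hb hab
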